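/- Let A be a bijective linear or conjugate-linear bounded operator on H and let D, D' be positive trace-class operators with ‖√D' Ax‖² / ‖Ax‖² = ‖√D x‖² / ‖x‖² for all nonzero x ∈ H. If D is not a scalar multiple of the identity, then A*A = μI for some μ > 0, i.e., A is a positive scalar multiple of a unitary (resp. antiunitary) operator. -/

import Mathlib

set_option synthInstance.maxHeartbeats 1000000
set_option maxHeartbeats 1000000

open scoped InnerProductSpace

private lemma coeff_dichotomy (T0 T1 T2 D0 D1 D2 B0 B1 B2 : ℝ)
    (h : ∀ t : ℝ, (T0 + 2*T1*t + T2*t^2) * (1 + t^2)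
        = (D0 + 2*D1*t + D2*t^2) * (B0 + 2*B1*t + B2*t^2)) :
    (D1 = 0 ∧ D0 = D2) ∨ (B1 = 0 ∧ B0 = B2) := by
  have h0 := h 0; have h1 := h 1; have hm1 := h (-1); have h2 := h 2; have hm2 := h (-2)
  have hI : D1*(B0 - B2) + B1*(D0 - D2) = 0 := by
    linear_combination (1/12 : ℝ)*h2 - (1/12 : ℝ)*hm2 - (5/12 : ℝ)*h1 + (5/12 : ℝ)*hm1
  have hII : (D0 - D2)*(B0 - B2) = 4*(D1*B1) := by
    linear_combination (-5/2 : ℝ)*h0 - (1/12 : ℝ)*h2 - (1/12 : ℝ)*hm2 + (5/6 : ℝ)*h1 + (5/6 : ℝ)*hm1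
  by_cases hq : B1 = 0
  · by_cases hb : B0 = B2
    · exact Or.inr ⟨hq, hb⟩
    · left
      have hb' : B0 - B2 ≠ 0 := sub_ne_zero.mpr hb
      constructor
      · have hD1 : D1 * (B0 - B2) = 0 := by linear_combination hI - (D0-D2)*hq
        exact (mul_eq_zero.mp hD1).resolve_right hb'
      · have hD0 : (D0 - D2) * (B0 - B2) = 0 := by linear_combination hII + 4*D1*hq
        exact sub_eq_zero.mp ((mul_eq_zero.mp hD0).resolve_right hb')
  · left
    have key : B1 * (4*D1^2 + (D0-D2)^2) = 0 := by
      linear_combination (-D1)*hII + (D0-D2)*hI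
    have h4 : 4*D1^2 + (D0-D2)^2 = 0 := (mul_eq_zero.mp key).resolve_left hq
    constructor
    · nlinarith [sq_nonneg D1, sq_nonneg (D0-D2)]
    · nlinarith [sq_nonneg D1, sq_nonneg (D0-D2)]

section Aux

variable {H : Type} [NormedAddCommGroup H] [InnerProductSpace ℂ H]

private lemma re_symm (p q : H) : (⟪p, q⟫_ℂ).re = (⟪q, p⟫_ℂ).re := by
  rw [← inner_conj_symm]
  exact Complex.conj_re _

private lemma re_norm (p : H) : (⟪p, p⟫_ℂ).re = ‖p‖^2 := by
  rw [← inner_self_eq_norm_sq (𝕜 := ℂ)]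
  rfl

private lemma form_pair (L : H → H) (hadd : ∀ x y : H, L (x + y) = L x + L y)
    (hsmul : ∀ (s : ℝ) (x : H), L ((s:ℂ) • x) = (s:ℂ) • L x)
    (x w y z : H) (s : ℝ) :
    (⟪L (x + (s:ℂ)•w), L (y + (s:ℂ)•z)⟫_ℂ).re
      = (⟪L x, L y⟫_ℂ).re + ((⟪L x, L z⟫_ℂ).re + (⟪L w, L y⟫_ℂ).re) * s
        + (⟪L w, L z⟫_ℂ).re * s^2 := by
  rw [hadd, hadd, hsmul, hsmul]
  simp only [inner_add_left, inner_add_right, inner_smul_left, inner_smul_right,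
    Complex.add_re, Complex.mul_re, Complex.conj_ofReal, Complex.ofReal_re, Complex.ofReal_im]
  ring

private lemma form_sq (L : H → H) (hadd : ∀ x y : H, L (x + y) = L x + L y)
    (hsmul : ∀ (s : ℝ) (x : H), L ((s:ℂ) • x) = (s:ℂ) • L x)
    (u v : H) (t : ℝ) :
    (⟪L (u + (t:ℂ)•v), L (u + (t:ℂ)•v)⟫_ℂ).re
      = (⟪L u, L u⟫_ℂ).re + 2*(⟪L u, L v⟫_ℂ).re*t + (⟪L v, L v⟫_ℂ).re*t^2 := by
  rw [form_pair L hadd hsmul u v u v t, re_symm (L v) (L u)]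
  ring

private lemma g_pair (x w y z : H) (s : ℝ) :
    (⟪x + (s:ℂ)•w, y + (s:ℂ)•z⟫_ℂ).re
      = (⟪x, y⟫_ℂ).re + ((⟪x, z⟫_ℂ).re + (⟪w, y⟫_ℂ).re) * s + (⟪w, z⟫_ℂ).re * s^2 := by
  simp only [inner_add_left, inner_add_right, inner_smul_left, inner_smul_right,
    Complex.add_re, Complex.mul_re, Complex.conj_ofReal, Complex.ofReal_re, Complex.ofReal_im]
  ring

private lemma g_sq (u v : H) (t : ℝ) :
    (⟪u + (t:ℂ)•v, u + (t:ℂ)•v⟫_ℂ).re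
      = (⟪u, u⟫_ℂ).re + 2*(⟪u, v⟫_ℂ).re*t + (⟪v, v⟫_ℂ).re*t^2 := by
  rw [g_pair u v u v t, re_symm v u]
  ring

private lemma form_comb (L : H → H) (hadd : ∀ x y : H, L (x + y) = L x + L y)
    (hsmul : ∀ (s : ℝ) (x : H), L ((s:ℂ) • x) = (s:ℂ) • L x)
    (a c a' c' : ℝ) (u v : H) :
    (⟪L ((a:ℂ)•u + (c:ℂ)•v), L ((a':ℂ)•u + (c':ℂ)•v)⟫_ℂ).re
      = a*a'*(⟪L u, L u⟫_ℂ).re + a*c'*(⟪L u, L v⟫_ℂ).re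
        + c*a'*(⟪L v, L u⟫_ℂ).re + c*c'*(⟪L v, L v⟫_ℂ).re := by
  rw [hadd, hadd, hsmul, hsmul, hsmul, hsmul]
  simp only [inner_add_left, inner_add_right, inner_smul_left, inner_smul_right,
    Complex.add_re, Complex.mul_re, Complex.conj_ofReal, Complex.ofReal_re, Complex.ofReal_im]
  ring

private lemma scalar_of_pairs (T : H →L[ℂ] H)
    (hsa : ∀ x y : H, ⟪T x, y⟫_ℂ = ⟪x, T y⟫_ℂ)
    (e : H) (he : ‖e‖ = 1)
    (hp : ∀ u v : H, ‖u‖ = 1 → ‖v‖ = 1 → (⟪u, v⟫_ℂ).re = 0 →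
      (⟪T u, v⟫_ℂ).re = 0 ∧ (⟪T u, u⟫_ℂ).re = (⟪T v, v⟫_ℂ).re) :
    T = (((⟪T e, e⟫_ℂ).re : ℝ) : ℂ) • (1 : H →L[ℂ] H) := by
  set α : ℝ := (⟪T e, e⟫_ℂ).re with hα
  have hTcomb : ∀ (a c : ℝ) (u v : H),
      (⟪T ((a:ℂ)•u + (c:ℂ)•v), (a:ℂ)•u + (c:ℂ)•v⟫_ℂ).re
        = a^2*(⟪T u, u⟫_ℂ).re + a*c*((⟪T u, v⟫_ℂ).re + (⟪T v, u⟫_ℂ).re)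
          + c^2*(⟪T v, v⟫_ℂ).re := by
    intro a c u v
    rw [map_add, map_smul, map_smul]
    simp only [inner_add_left, inner_add_right, inner_smul_left, inner_smul_right,
      Complex.add_re, Complex.mul_re, Complex.conj_ofReal, Complex.ofReal_re, Complex.ofReal_im]
    ring
  have hTsmul : ∀ (c : ℝ) (z : H), (⟪T ((c:ℂ)•z), (c:ℂ)•z⟫_ℂ).re = c^2 * (⟪T z, z⟫_ℂ).re := by
    intro c z
    rw [map_smul]
    simp only [inner_smul_left, inner_smul_right, Complex.mul_re, Complex.conj_ofReal,
      Complex.ofReal_re, Complex.ofReal_im]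
    ring
  have hunit : ∀ z : H, ‖z‖ = 1 → (⟪T z, z⟫_ℂ).re = α := by
    intro z hz
    set r : ℝ := (⟪e, z⟫_ℂ).re with hr
    by_cases hw : z - (r:ℂ) • e = 0
    · have hz' : z = (r:ℂ) • e := by rwa [sub_eq_zero] at hw
      have hr2 : r^2 = 1 := by
        have h1 : ‖z‖ = ‖(r:ℂ)‖ * ‖e‖ := by rw [hz', norm_smul]
        rw [hz, he, mul_one, Complex.norm_real, Real.norm_eq_abs] at h1
        nlinarith [sq_abs r, h1]
      rw [hz', hTsmul, hr2, one_mul]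
    · set w : H := z - (r:ℂ) • e with hwdef
      have hnw : ‖w‖ ≠ 0 := fun h => hw (norm_eq_zero.mp h)
      set v : H := ((‖w‖⁻¹ : ℝ) : ℂ) • w with hvdef
      have hv : ‖v‖ = 1 := by
        rw [hvdef, norm_smul, Complex.norm_real, norm_inv, Real.norm_eq_abs,
          abs_of_nonneg (norm_nonneg w)]
        field_simp
      have hew : (⟪e, w⟫_ℂ).re = 0 := by
        rw [hwdef]
        simp only [inner_sub_right, inner_smul_right, Complex.sub_re, Complex.mul_re,
          Complex.ofReal_re, Complex.ofReal_im, re_norm, he]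
        simp [← hr]
      have hev : (⟪e, v⟫_ℂ).re = 0 := by
        rw [hvdef]
        simp only [inner_smul_right, Complex.mul_re, Complex.ofReal_re, Complex.ofReal_im, hew]
        ring
      have hz2 : z = (r:ℂ) • e + ((‖w‖:ℝ) : ℂ) • v := by
        rw [hvdef, smul_smul]
        have : ((‖w‖:ℝ) : ℂ) * ((‖w‖⁻¹ : ℝ) : ℂ) = 1 := by
          rw [← Complex.ofReal_mul, mul_inv_cancel₀ hnw, Complex.ofReal_one]
        rw [this, one_smul, hwdef]
        abel
      obtain ⟨h1, h2⟩ := hp e v he hv hev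
      have hTve : (⟪T v, e⟫_ℂ).re = 0 := by
        have : (⟪T v, e⟫_ℂ).re = (⟪T e, v⟫_ℂ).re := by
          rw [hsa v e, re_symm]
        rw [this, h1]
      have hpyth : r^2 + ‖w‖^2 = 1 := by
        have hx := form_comb (id : H → H) (fun _ _ => rfl) (fun _ _ => rfl) r ‖w‖ r ‖w‖ e v
        simp only [id] at hx
        rw [← hz2] at hx
        rw [re_norm, hz, re_norm, he, re_norm, hv, hev, re_symm v e, hev] at hx
        nlinarith [hx]
      rw [hz2, hTcomb, h1, hTve, ← h2, ← hα]
      linear_combination α * hpyth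
  have hall : ∀ z : H, (⟪T z, z⟫_ℂ).re = α * ‖z‖^2 := by
    intro z
    by_cases hz : z = 0
    · simp [hz]
    · have hnz : ‖z‖ ≠ 0 := fun h => hz (norm_eq_zero.mp h)
      have hu : ‖((‖z‖⁻¹ : ℝ) : ℂ) • z‖ = 1 := by
        rw [norm_smul, Complex.norm_real, norm_inv, Real.norm_eq_abs,
          abs_of_nonneg (norm_nonneg z)]
        field_simp
      have := hunit _ hu
      rw [hTsmul] at this
      field_simp at this ⊢
      nlinarith [this]
  have hreal : ∀ z : H, ⟪T z, z⟫_ℂ = ((⟪T z, z⟫_ℂ).re : ℂ) := by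
    intro z
    have hc : (starRingEnd ℂ) ⟪T z, z⟫_ℂ = ⟪T z, z⟫_ℂ := by
      rw [inner_conj_symm, ← hsa z z]
    exact (Complex.conj_eq_iff_re.mp hc).symm
  have key : ∀ z : H, ⟪(T - ((α : ℝ) : ℂ) • (1 : H →L[ℂ] H)) z, z⟫_ℂ = 0 := by
    intro z
    rw [ContinuousLinearMap.sub_apply, inner_sub_left, ContinuousLinearMap.smul_apply,
      ContinuousLinearMap.one_apply, inner_smul_left, Complex.conj_ofReal,
      inner_self_eq_norm_sq_to_K, hreal z, hall z]
    have hco : (RCLike.ofReal ‖z‖ : ℂ) = ((‖z‖ : ℝ) : ℂ) := rfl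
    rw [hco]
    push_cast
    ring
  have hzero : T - ((α : ℝ) : ℂ) • (1 : H →L[ℂ] H) = 0 := by
    have h' := (inner_map_self_eq_zero
      ((T - ((α : ℝ) : ℂ) • (1 : H →L[ℂ] H)) : H →ₗ[ℂ] H)).mp (fun z => key z)
    ext z
    have := congrFun (congrArg (fun (f : H →ₗ[ℂ] H) => (f : H → H)) h') z
    simpa using this
  have := sub_eq_zero.mp hzero
  rw [this]

private lemma g_smul_right (s : ℝ) (x y : H) :
    (⟪x, (s:ℂ)•y⟫_ℂ).re = s * (⟪x, y⟫_ℂ).re := by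
  simp only [inner_smul_right, Complex.mul_re, Complex.ofReal_re, Complex.ofReal_im]
  ring

private lemma g_smul (r s : ℝ) (u v : H) :
    (⟪(r:ℂ)•u, (s:ℂ)•v⟫_ℂ).re = r*s*(⟪u, v⟫_ℂ).re := by
  simp only [inner_smul_left, inner_smul_right, Complex.mul_re, Complex.conj_ofReal,
    Complex.ofReal_re, Complex.ofReal_im]
  ring

private lemma g_comb (a c a' c' : ℝ) (u v : H) :
    (⟪(a:ℂ)•u + (c:ℂ)•v, (a':ℂ)•u + (c':ℂ)•v⟫_ℂ).re
      = a*a'*(⟪u, u⟫_ℂ).re + a*c'*(⟪u, v⟫_ℂ).re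
        + c*a'*(⟪v, u⟫_ℂ).re + c*c'*(⟪v, v⟫_ℂ).re := by
  simp only [inner_add_left, inner_add_right, inner_smul_left, inner_smul_right,
    Complex.add_re, Complex.mul_re, Complex.conj_ofReal, Complex.ofReal_re, Complex.ofReal_im]
  ring

private lemma norm_eq_one_of_sq {x : H} (h : ‖x‖^2 = 1) : ‖x‖ = 1 := by
  nlinarith [norm_nonneg x]

private lemma norm_normalize {x : H} (hx : x ≠ 0) : ‖((‖x‖⁻¹ : ℝ) : ℂ) • x‖ = 1 := by
  have hnx : ‖x‖ ≠ 0 := fun h => hx (norm_eq_zero.mp h)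
  rw [norm_smul, Complex.norm_real, norm_inv, Real.norm_eq_abs, abs_of_nonneg (norm_nonneg x)]
  field_simp

end Aux

open Polynomial in
private noncomputable def quadP (a b c : ℝ) : Polynomial ℝ :=
  C a + C b * X + C c * X ^ 2

private lemma quadP_eval (a b c s : ℝ) : (quadP a b c).eval s = a + b*s + c*s^2 := by
  simp [quadP]

/-- let `A` be a bounded bijective linear or conjugate-linear operator on
`H` (the operator `B` below plays the role of `A*A` in either case) and `D`, `D'`
positive trace-class operators with `‖√D' Ax‖²/‖Ax‖² = ‖√D x‖²/‖x‖²` for all nonzero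
`x`. If `D` is not a scalar multiple of the identity, then `A*A = μI` for some `μ > 0`,
i.e. `A` is a positive scalar multiple of a unitary (resp. antiunitary) operator. -/
theorem adjoint_comp_self_eq_scalar_of_probability_identity
    {H : Type} [NormedAddCommGroup H] [InnerProductSpace ℂ H] [CompleteSpace H]
    (hdim : 2 ≤ Module.rank ℂ H)
    {ι : Type} (b : HilbertBasis ι ℂ H)
    (D D' : H →L[ℂ] H)
    (hD : 0 ≤ D) (hDtc : Summable fun i => ⟪D (b i), b i⟫_ℂ)
    (hD' : 0 ≤ D') (hD'tc : Summable fun i => ⟪D' (b i), b i⟫_ℂ)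
    (hnonscalar : ∀ c : ℂ, D ≠ c • (1 : H →L[ℂ] H))
    (A : H → H) (hbij : Function.Bijective A)
    (hadd : ∀ x y : H, A (x + y) = A x + A y)
    (hbdd : ∃ C : ℝ, ∀ x : H, ‖A x‖ ≤ C * ‖x‖)
    (B : H →L[ℂ] H)
    (hcase :
      ((∀ (c : ℂ) (x : H), A (c • x) = c • A x) ∧
        ∀ x y : H, ⟪B x, y⟫_ℂ = ⟪A x, A y⟫_ℂ) ∨
      ((∀ (c : ℂ) (x : H), A (c • x) = (starRingEnd ℂ c) • A x) ∧
        ∀ x y : H, ⟪B x, y⟫_ℂ = ⟪A y, A x⟫_ℂ))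
    (hmain : ∀ x : H, x ≠ 0 →
      ‖CFC.sqrt D' (A x)‖ ^ 2 / ‖A x‖ ^ 2 = ‖CFC.sqrt D x‖ ^ 2 / ‖x‖ ^ 2) :
    ∃ mu : ℝ, 0 < mu ∧ B = ((mu : ℝ) : ℂ) • (1 : H →L[ℂ] H) := by
  -- notation
  set S : H →L[ℂ] H := CFC.sqrt D with hSdef
  set S' : H →L[ℂ] H := CFC.sqrt D' with hS'def
  -- basic facts about A
  have hA0 : A 0 = 0 := by
    have h := hadd 0 0
    rw [add_zero] at h
    have := h.symm
    rwa [add_eq_left] at this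
  have hAsm : ∀ (s : ℝ) (x : H), A ((s:ℂ) • x) = (s:ℂ) • A x := by
    rcases hcase with ⟨hsm, _⟩ | ⟨hsm, _⟩
    · intro s x; rw [hsm]
    · intro s x; rw [hsm, Complex.conj_ofReal]
  have hSadd : ∀ x y : H, S (x + y) = S x + S y := fun x y => map_add S x y
  have hSsm : ∀ (s : ℝ) (x : H), S ((s:ℂ) • x) = (s:ℂ) • S x := fun s x => map_smul S (s:ℂ) x
  have hSAadd : ∀ x y : H, S' (A (x + y)) = S' (A x) + S' (A y) := by
    intro x y; rw [hadd, map_add]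
  have hSAsm : ∀ (s : ℝ) (x : H), S' (A ((s:ℂ) • x)) = (s:ℂ) • S' (A x) := by
    intro s x; rw [hAsm, map_smul]
  have hAne : ∀ x : H, x ≠ 0 → A x ≠ 0 := by
    intro x hx hc
    exact hx (hbij.1 (by rw [hc, hA0]))
  -- the quartic pointwise identity
  have hq : ∀ z : H, (⟪S' (A z), S' (A z)⟫_ℂ).re * (⟪z, z⟫_ℂ).re
      = (⟪S z, S z⟫_ℂ).re * (⟪A z, A z⟫_ℂ).re := by
    intro z
    by_cases hz : z = 0
    · simp [hz, hA0]
    · have h1 : ‖A z‖ ^ 2 ≠ 0 := pow_ne_zero 2 (norm_ne_zero_iff.mpr (hAne z hz))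
      have h2 : ‖z‖ ^ 2 ≠ 0 := pow_ne_zero 2 (norm_ne_zero_iff.mpr hz)
      have h := hmain z hz
      rw [div_eq_div_iff h1 h2] at h
      rw [re_norm, re_norm, re_norm, re_norm]
      linear_combination h
  -- dichotomy for real-orthonormal pairs
  have hdich : ∀ u v : H, ‖u‖ = 1 → ‖v‖ = 1 → (⟪u, v⟫_ℂ).re = 0 →
      ((⟪S u, S v⟫_ℂ).re = 0 ∧ (⟪S u, S u⟫_ℂ).re = (⟪S v, S v⟫_ℂ).re) ∨
      ((⟪A u, A v⟫_ℂ).re = 0 ∧ (⟪A u, A u⟫_ℂ).re = (⟪A v, A v⟫_ℂ).re) := by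
    intro u v hu hv huv
    refine coeff_dichotomy (⟪S' (A u), S' (A u)⟫_ℂ).re (⟪S' (A u), S' (A v)⟫_ℂ).re
      (⟪S' (A v), S' (A v)⟫_ℂ).re _ _ _ _ _ _ (fun t => ?_)
    have h := hq (u + (t:ℂ) • v)
    have e1 := form_sq (fun a : H => S' (A a)) hSAadd hSAsm u v t
    have e2 := form_sq (fun a : H => S a) hSadd hSsm u v t
    have e3 := form_sq A hadd hAsm u v t
    rw [e1, e2, e3, g_sq u v t] at h
    have huu : (⟪u, u⟫_ℂ).re = 1 := by rw [re_norm, hu]; norm_num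
    have hvv : (⟪v, v⟫_ℂ).re = 1 := by rw [re_norm, hv]; norm_num
    rw [huu, hvv, huv] at h
    linear_combination h
  -- dichotomy for general independent pairs, in determinant form
  have hgen : ∀ P Q : H,
      (⟪P, P⟫_ℂ).re * (⟪Q, Q⟫_ℂ).re - (⟪P, Q⟫_ℂ).re^2 ≠ 0 →
      ((⟪S P, S P⟫_ℂ).re * (⟪P, Q⟫_ℂ).re - (⟪S P, S Q⟫_ℂ).re * (⟪P, P⟫_ℂ).re = 0) ∨
      (((⟪A P, A P⟫_ℂ).re * (⟪P, Q⟫_ℂ).re - (⟪A P, A Q⟫_ℂ).re * (⟪P, P⟫_ℂ).re = 0) ∧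
       ((⟪A P, A P⟫_ℂ).re * (⟪Q, Q⟫_ℂ).re - (⟪A Q, A Q⟫_ℂ).re * (⟪P, P⟫_ℂ).re = 0)) := by
    intro P Q hPQ
    by_cases hP : P = 0
    · exfalso; apply hPQ; simp [hP]
    · have hnP : ‖P‖ ≠ 0 := fun h => hP (norm_eq_zero.mp h)
      set u : H := ((‖P‖⁻¹ : ℝ) : ℂ) • P with hudef
      have huu : ‖u‖ = 1 := norm_normalize hP
      have hPu : ((‖P‖ : ℝ) : ℂ) • u = P := by
        rw [hudef, smul_smul, ← Complex.ofReal_mul, mul_inv_cancel₀ hnP, Complex.ofReal_one,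
          one_smul]
      set r : ℝ := (⟪u, Q⟫_ℂ).re with hrdef
      have hPQr : (⟪P, Q⟫_ℂ).re = ‖P‖ * r := by
        have h2 : (⟪((‖P‖ : ℝ) : ℂ) • u, Q⟫_ℂ).re = ‖P‖ * (⟪u, Q⟫_ℂ).re := by
          simp only [inner_smul_left, Complex.mul_re, Complex.conj_ofReal,
            Complex.ofReal_re, Complex.ofReal_im]
          ring
        rw [hrdef, ← h2, hPu]
      have hPP : (⟪P, P⟫_ℂ).re = ‖P‖^2 := re_norm P
      by_cases hw : Q - (r:ℂ) • u = 0
      · exfalso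
        apply hPQ
        have hQ : Q = (r:ℂ) • u := by rwa [sub_eq_zero] at hw
        have hQQ : (⟪Q, Q⟫_ℂ).re = r^2 := by
          rw [hQ, g_smul, re_norm, huu]
          ring_nf
        rw [hPP, hQQ, hPQr]
        ring
      · set wv : H := Q - (r:ℂ) • u with hwdef
        have hnw : ‖wv‖ ≠ 0 := fun h => hw (norm_eq_zero.mp h)
        set v : H := ((‖wv‖⁻¹ : ℝ) : ℂ) • wv with hvdef
        have hvv : ‖v‖ = 1 := norm_normalize hw
        have hcv : ((‖wv‖:ℝ):ℂ) • v = wv := by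
          rw [hvdef, smul_smul, ← Complex.ofReal_mul, mul_inv_cancel₀ hnw,
            Complex.ofReal_one, one_smul]
        have hQrep : Q = (r:ℂ) • u + ((‖wv‖:ℝ):ℂ) • v := by
          rw [hcv, hwdef]
          abel
        have hPrep : P = ((‖P‖:ℝ):ℂ) • u + ((0:ℝ):ℂ) • v := by
          rw [Complex.ofReal_zero, zero_smul, add_zero, hPu]
        have huw : (⟪u, wv⟫_ℂ).re = 0 := by
          rw [hwdef]
          simp only [inner_sub_right, Complex.sub_re]
          rw [g_smul_right, re_norm, huu]
          simp [← hrdef]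
        have huv : (⟪u, v⟫_ℂ).re = 0 := by
          rw [hvdef, g_smul_right, huw, mul_zero]
        have hvu : (⟪v, u⟫_ℂ).re = 0 := by rw [re_symm, huv]
        have hguu : (⟪u, u⟫_ℂ).re = 1 := by rw [re_norm, huu]; norm_num
        have hgvv : (⟪v, v⟫_ℂ).re = 1 := by rw [re_norm, hvv]; norm_num
        -- values of the g-form
        have hgPQ : (⟪P, Q⟫_ℂ).re = ‖P‖ * r := hPQr
        have hgQQ : (⟪Q, Q⟫_ℂ).re = r^2 + ‖wv‖^2 := by
          rw [hQrep, g_comb, hguu, hgvv, huv, hvu]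
          ring
        rcases hdich u v huu hvv huv with ⟨hd1, hd2⟩ | ⟨hb1, hb2⟩
        · -- S-scalar case
          left
          have hsvu : (⟪S v, S u⟫_ℂ).re = 0 := by rw [re_symm, hd1]
          have c1 : (⟪S P, S P⟫_ℂ).re = ‖P‖^2 * (⟪S u, S u⟫_ℂ).re := by
            nth_rewrite 1 2 [hPrep]
            have e := form_comb (fun a : H => S a) hSadd hSsm ‖P‖ 0 ‖P‖ 0 u v
            rw [e]; ring
          have c2 : (⟪S P, S Q⟫_ℂ).re = ‖P‖ * r * (⟪S u, S u⟫_ℂ).re := by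
            nth_rewrite 1 [hPrep]
            rw [hQrep]
            have e := form_comb (fun a : H => S a) hSadd hSsm ‖P‖ 0 r ‖wv‖ u v
            rw [e, hd1, hsvu]; ring
          rw [c1, c2, hPP, hgPQ]
          ring
        · -- A-scalar case
          right
          have hbvu : (⟪A v, A u⟫_ℂ).re = 0 := by rw [re_symm, hb1]
          have c1 : (⟪A P, A P⟫_ℂ).re = ‖P‖^2 * (⟪A u, A u⟫_ℂ).re := by
            nth_rewrite 1 2 [hPrep]
            have e := form_comb A hadd hAsm ‖P‖ 0 ‖P‖ 0 u v
            rw [e]; ring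
          have c2 : (⟪A P, A Q⟫_ℂ).re = ‖P‖ * r * (⟪A u, A u⟫_ℂ).re := by
            nth_rewrite 1 [hPrep]
            rw [hQrep]
            have e := form_comb A hadd hAsm ‖P‖ 0 r ‖wv‖ u v
            rw [e, hb1, hbvu]; ring
          have c3 : (⟪A Q, A Q⟫_ℂ).re = (r^2 + ‖wv‖^2) * (⟪A u, A u⟫_ℂ).re := by
            nth_rewrite 1 2 [hQrep]
            have e := form_comb A hadd hAsm r ‖wv‖ r ‖wv‖ u v
            rw [e, hb1, hbvu, ← hb2]; ring
          constructor
          · rw [c1, c2, hPP, hgPQ]; ring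
          · rw [c1, c3, hPP, hgQQ]; ring
  -- a unit vector
  have hex0 : ∃ x0 : H, x0 ≠ 0 := by
    refine rank_pos_iff_exists_ne_zero.mp (lt_of_lt_of_le ?_ hdim)
    norm_num
  obtain ⟨x0, hx0⟩ := hex0
  set e : H := ((‖x0‖⁻¹ : ℝ) : ℂ) • x0 with hedef
  have he : ‖e‖ = 1 := norm_normalize hx0
  have hene : e ≠ 0 := by
    intro h
    rw [h, norm_zero] at he
    norm_num at he
  -- self-adjointness facts
  have hSpos : (0:H →L[ℂ] H) ≤ S := CFC.sqrt_nonneg D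
  have hSsa : ∀ x y : H, ⟪S x, y⟫_ℂ = ⟪x, S y⟫_ℂ := by
    have := ((ContinuousLinearMap.nonneg_iff_isPositive S).mp hSpos).isSelfAdjoint
    exact fun x y => (ContinuousLinearMap.isSelfAdjoint_iff_isSymmetric.mp this) x y
  have hDsa : ∀ x y : H, ⟪D x, y⟫_ℂ = ⟪x, D y⟫_ℂ := by
    have := ((ContinuousLinearMap.nonneg_iff_isPositive D).mp hD).isSelfAdjoint
    exact fun x y => (ContinuousLinearMap.isSelfAdjoint_iff_isSymmetric.mp this) x y
  have hSS : ∀ x : H, S (S x) = D x := by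
    intro x
    rw [← ContinuousLinearMap.mul_apply, hSdef, CFC.sqrt_mul_sqrt_self D hD]
  have hDS : ∀ x y : H, (⟪S x, S y⟫_ℂ).re = (⟪D x, y⟫_ℂ).re := by
    intro x y
    rw [hSsa x (S y), hSS y, ← hDsa x y]
  -- extraction of a pair where the D-form is not diagonal
  have hex : ∃ u₀ v₀ : H, ‖u₀‖ = 1 ∧ ‖v₀‖ = 1 ∧ (⟪u₀, v₀⟫_ℂ).re = 0 ∧
      (⟪S u₀, S v₀⟫_ℂ).re ≠ 0 := by
    by_contra hcon
    push_neg at hcon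
    have hoff : ∀ u v : H, ‖u‖ = 1 → ‖v‖ = 1 → (⟪u, v⟫_ℂ).re = 0 →
        (⟪S u, S v⟫_ℂ).re = 0 := fun u v hu hv huv => hcon u v hu hv huv
    have hdiag : ∀ u v : H, ‖u‖ = 1 → ‖v‖ = 1 → (⟪u, v⟫_ℂ).re = 0 →
        (⟪S u, S u⟫_ℂ).re = (⟪S v, S v⟫_ℂ).re := by
      intro u v hu hv huv
      set s2 : ℝ := (Real.sqrt 2)⁻¹ with hs2def
      have hs2 : s2^2 = 1/2 := by
        rw [hs2def, inv_pow, Real.sq_sqrt (by norm_num : (0:ℝ) ≤ 2)]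
        norm_num
      have hguu : (⟪u, u⟫_ℂ).re = 1 := by rw [re_norm, hu]; norm_num
      have hgvv : (⟪v, v⟫_ℂ).re = 1 := by rw [re_norm, hv]; norm_num
      have hgvu : (⟪v, u⟫_ℂ).re = 0 := by rw [re_symm, huv]
      set u1 : H := ((s2:ℝ):ℂ) • u + ((s2:ℝ):ℂ) • v with hu1def
      set v1 : H := ((s2:ℝ):ℂ) • u + ((-s2:ℝ):ℂ) • v with hv1def
      have hu1 : ‖u1‖ = 1 := by
        apply norm_eq_one_of_sq
        rw [← re_norm, hu1def, g_comb, hguu, hgvv, huv, hgvu]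
        nlinarith [hs2]
      have hv1 : ‖v1‖ = 1 := by
        apply norm_eq_one_of_sq
        rw [← re_norm, hv1def, g_comb, hguu, hgvv, huv, hgvu]
        nlinarith [hs2]
      have hu1v1 : (⟪u1, v1⟫_ℂ).re = 0 := by
        rw [hu1def, hv1def, g_comb, hguu, hgvv, huv, hgvu]
        ring
      have h1 := hoff u1 v1 hu1 hv1 hu1v1
      rw [hu1def, hv1def, form_comb (fun a : H => S a) hSadd hSsm,
        hoff u v hu hv huv] at h1
      have hsvu : (⟪S v, S u⟫_ℂ).re = 0 := by rw [re_symm, hoff u v hu hv huv]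
      rw [hsvu] at h1
      have hs2ne : s2^2 ≠ 0 := by rw [hs2]; norm_num
      nlinarith [h1, hs2]
    have hp : ∀ u v : H, ‖u‖ = 1 → ‖v‖ = 1 → (⟪u, v⟫_ℂ).re = 0 →
        (⟪D u, v⟫_ℂ).re = 0 ∧ (⟪D u, u⟫_ℂ).re = (⟪D v, v⟫_ℂ).re := by
      intro u v hu hv huv
      constructor
      · rw [← hDS]; exact hoff u v hu hv huv
      · rw [← hDS, ← hDS]; exact hdiag u v hu hv huv
    exact hnonscalar _ (scalar_of_pairs D hDsa e he hp)
  obtain ⟨u₀, v₀, hu₀, hv₀, huv₀, hSne⟩ := hex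
  -- the path/polynomial argument: the A-form is scalar on every real-orthonormal pair
  have hPb : ∀ x y : H, ‖x‖ = 1 → ‖y‖ = 1 → (⟪x, y⟫_ℂ).re = 0 →
      (⟪A x, A y⟫_ℂ).re = 0 ∧ (⟪A x, A x⟫_ℂ).re = (⟪A y, A y⟫_ℂ).re := by
    intro x y hx hy hxy
    set w : H := u₀ - x with hwdef
    set z : H := v₀ - y with hzdef
    set p : ℝ → H := fun s => x + (s:ℂ) • w with hpdef
    set q : ℝ → H := fun s => y + (s:ℂ) • z with hqdef
    -- the nine quadratic polynomials
    set Pd_pp : Polynomial ℝ := quadP (⟪S x, S x⟫_ℂ).re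
      ((⟪S x, S w⟫_ℂ).re + (⟪S w, S x⟫_ℂ).re) (⟪S w, S w⟫_ℂ).re with hPdpp
    set Pd_pq : Polynomial ℝ := quadP (⟪S x, S y⟫_ℂ).re
      ((⟪S x, S z⟫_ℂ).re + (⟪S w, S y⟫_ℂ).re) (⟪S w, S z⟫_ℂ).re with hPdpq
    set Pb_pp : Polynomial ℝ := quadP (⟪A x, A x⟫_ℂ).re
      ((⟪A x, A w⟫_ℂ).re + (⟪A w, A x⟫_ℂ).re) (⟪A w, A w⟫_ℂ).re with hPbpp
    set Pb_pq : Polynomial ℝ := quadP (⟪A x, A y⟫_ℂ).re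
      ((⟪A x, A z⟫_ℂ).re + (⟪A w, A y⟫_ℂ).re) (⟪A w, A z⟫_ℂ).re with hPbpq
    set Pb_qq : Polynomial ℝ := quadP (⟪A y, A y⟫_ℂ).re
      ((⟪A y, A z⟫_ℂ).re + (⟪A z, A y⟫_ℂ).re) (⟪A z, A z⟫_ℂ).re with hPbqq
    set Pg_pp : Polynomial ℝ := quadP (⟪x, x⟫_ℂ).re
      ((⟪x, w⟫_ℂ).re + (⟪w, x⟫_ℂ).re) (⟪w, w⟫_ℂ).re with hPgpp
    set Pg_pq : Polynomial ℝ := quadP (⟪x, y⟫_ℂ).re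
      ((⟪x, z⟫_ℂ).re + (⟪w, y⟫_ℂ).re) (⟪w, z⟫_ℂ).re with hPgpq
    set Pg_qq : Polynomial ℝ := quadP (⟪y, y⟫_ℂ).re
      ((⟪y, z⟫_ℂ).re + (⟪z, y⟫_ℂ).re) (⟪z, z⟫_ℂ).re with hPgqq
    -- evaluation identities
    have edpp : ∀ s : ℝ, Pd_pp.eval s = (⟪S (p s), S (p s)⟫_ℂ).re := by
      intro s
      rw [hPdpp, quadP_eval]
      have h := form_pair (fun a : H => S a) hSadd hSsm x w x w s
      rw [h]
    have edpq : ∀ s : ℝ, Pd_pq.eval s = (⟪S (p s), S (q s)⟫_ℂ).re := by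
      intro s
      rw [hPdpq, quadP_eval]
      have h := form_pair (fun a : H => S a) hSadd hSsm x w y z s
      rw [h]
    have ebpp : ∀ s : ℝ, Pb_pp.eval s = (⟪A (p s), A (p s)⟫_ℂ).re := by
      intro s
      rw [hPbpp, quadP_eval, form_pair A hadd hAsm x w x w s]
    have ebpq : ∀ s : ℝ, Pb_pq.eval s = (⟪A (p s), A (q s)⟫_ℂ).re := by
      intro s
      rw [hPbpq, quadP_eval, form_pair A hadd hAsm x w y z s]
    have ebqq : ∀ s : ℝ, Pb_qq.eval s = (⟪A (q s), A (q s)⟫_ℂ).re := by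
      intro s
      rw [hPbqq, quadP_eval, form_pair A hadd hAsm y z y z s]
    have egpp : ∀ s : ℝ, Pg_pp.eval s = (⟪p s, p s⟫_ℂ).re := by
      intro s
      rw [hPgpp, quadP_eval, g_pair x w x w s]
    have egpq : ∀ s : ℝ, Pg_pq.eval s = (⟪p s, q s⟫_ℂ).re := by
      intro s
      rw [hPgpq, quadP_eval, g_pair x w y z s]
    have egqq : ∀ s : ℝ, Pg_qq.eval s = (⟪q s, q s⟫_ℂ).re := by
      intro s
      rw [hPgqq, quadP_eval, g_pair y z y z s]
    -- endpoint values of the path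
    have hp0 : p 0 = x := by rw [hpdef]; simp
    have hq0 : q 0 = y := by rw [hqdef]; simp
    have hp1 : p 1 = u₀ := by
      rw [hpdef]
      simp only [Complex.ofReal_one, one_smul, hwdef]
      abel
    have hq1 : q 1 = v₀ := by
      rw [hqdef]
      simp only [Complex.ofReal_one, one_smul, hzdef]
      abel
    -- unit values
    have hgxx : (⟪x, x⟫_ℂ).re = 1 := by rw [re_norm, hx]; norm_num
    have hgyy : (⟪y, y⟫_ℂ).re = 1 := by rw [re_norm, hy]; norm_num
    -- the four combined polynomials
    set Φ : Polynomial ℝ := Pd_pp * Pg_pq - Pd_pq * Pg_pp with hΦdef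
    set Ψ₁ : Polynomial ℝ := Pb_pp * Pg_pq - Pb_pq * Pg_pp with hΨ₁def
    set Ψ₂ : Polynomial ℝ := Pb_pp * Pg_qq - Pb_qq * Pg_pp with hΨ₂def
    set Γ : Polynomial ℝ := Pg_pp * Pg_qq - Pg_pq * Pg_pq with hΓdef
    have hΓeval : ∀ s : ℝ, Γ.eval s
        = (⟪p s, p s⟫_ℂ).re * (⟪q s, q s⟫_ℂ).re - (⟪p s, q s⟫_ℂ).re^2 := by
      intro s
      rw [hΓdef]
      simp only [Polynomial.eval_sub, Polynomial.eval_mul, egpp, egpq, egqq]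
      ring
    have hΓ0 : Γ.eval 0 = 1 := by
      rw [hΓeval 0, hp0, hq0, hgxx, hgyy, hxy]
      norm_num
    have hΓne : Γ ≠ 0 := by
      intro h
      rw [h, Polynomial.eval_zero] at hΓ0
      norm_num at hΓ0
    have hUinf : {s : ℝ | Γ.eval s ≠ 0}.Infinite := by
      have hfin := Polynomial.finite_setOf_isRoot hΓne
      have := hfin.infinite_compl
      have heq : {s : ℝ | Γ.eval s ≠ 0} = {s : ℝ | Γ.IsRoot s}ᶜ := by
        ext s
        simp [Polynomial.IsRoot]
      rwa [heq]
    have hvanish : ∀ s : ℝ, Γ.eval s ≠ 0 → (Φ * Ψ₁).eval s = 0 ∧ (Φ * Ψ₂).eval s = 0 := by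
      intro s hs
      rw [hΓeval] at hs
      rcases hgen (p s) (q s) hs with hdc | ⟨hbc1, hbc2⟩
      · have hΦ0 : Φ.eval s = 0 := by
          rw [hΦdef]
          simp only [Polynomial.eval_sub, Polynomial.eval_mul, edpp, edpq, egpp, egpq]
          exact hdc
        constructor <;> rw [Polynomial.eval_mul, hΦ0, zero_mul]
      · constructor <;> rw [Polynomial.eval_mul]
        · have : Ψ₁.eval s = 0 := by
            rw [hΨ₁def]
            simp only [Polynomial.eval_sub, Polynomial.eval_mul, ebpp, ebpq, egpp, egpq]
            exact hbc1
          rw [this, mul_zero]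
        · have : Ψ₂.eval s = 0 := by
            rw [hΨ₂def]
            simp only [Polynomial.eval_sub, Polynomial.eval_mul, ebpp, ebqq, egpp, egqq]
            exact hbc2
          rw [this, mul_zero]
    have hΦne : Φ ≠ 0 := by
      intro h
      have he1 : Φ.eval 1 = 0 := by rw [h, Polynomial.eval_zero]
      rw [hΦdef] at he1
      simp only [Polynomial.eval_sub, Polynomial.eval_mul, edpp, edpq, egpp, egpq] at he1
      rw [hp1, hq1] at he1
      have hg1 : (⟪u₀, v₀⟫_ℂ).re = 0 := huv₀
      have hg2 : (⟪u₀, u₀⟫_ℂ).re = 1 := by rw [re_norm, hu₀]; norm_num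
      rw [hg1, hg2] at he1
      apply hSne
      linarith [he1]
    have hmul1 : Φ * Ψ₁ = 0 := by
      apply Polynomial.eq_zero_of_infinite_isRoot
      apply hUinf.mono
      intro s hs
      exact (hvanish s hs).1
    have hmul2 : Φ * Ψ₂ = 0 := by
      apply Polynomial.eq_zero_of_infinite_isRoot
      apply hUinf.mono
      intro s hs
      exact (hvanish s hs).2
    have hΨ₁0 : Ψ₁ = 0 := (mul_eq_zero.mp hmul1).resolve_left hΦne
    have hΨ₂0 : Ψ₂ = 0 := (mul_eq_zero.mp hmul2).resolve_left hΦne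
    have he1 : Ψ₁.eval 0 = 0 := by rw [hΨ₁0, Polynomial.eval_zero]
    have he2 : Ψ₂.eval 0 = 0 := by rw [hΨ₂0, Polynomial.eval_zero]
    rw [hΨ₁def] at he1
    simp only [Polynomial.eval_sub, Polynomial.eval_mul, ebpp, ebpq, egpp, egpq] at he1
    rw [hp0, hq0, hgxx, hxy] at he1
    rw [hΨ₂def] at he2
    simp only [Polynomial.eval_sub, Polynomial.eval_mul, ebpp, ebqq, egpp, egqq] at he2
    rw [hp0, hq0, hgxx, hgyy] at he2
    constructor
    · linarith [he1]
    · linarith [he2]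
  -- conclude that B is a scalar
  have hBsa : ∀ x y : H, ⟪B x, y⟫_ℂ = ⟪x, B y⟫_ℂ := by
    rcases hcase with ⟨_, hB⟩ | ⟨_, hB⟩
    · intro x y
      rw [hB x y, ← inner_conj_symm x (B y), hB y x, inner_conj_symm]
    · intro x y
      rw [hB x y, ← inner_conj_symm x (B y), hB y x, inner_conj_symm]
  have hBA : ∀ u v : H, (⟪B u, v⟫_ℂ).re = (⟪A u, A v⟫_ℂ).re := by
    rcases hcase with ⟨_, hB⟩ | ⟨_, hB⟩
    · intro u v; rw [hB u v]
    · intro u v; rw [hB u v, re_symm]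
  have hp : ∀ u v : H, ‖u‖ = 1 → ‖v‖ = 1 → (⟪u, v⟫_ℂ).re = 0 →
      (⟪B u, v⟫_ℂ).re = 0 ∧ (⟪B u, u⟫_ℂ).re = (⟪B v, v⟫_ℂ).re := by
    intro u v hu hv huv
    obtain ⟨h1, h2⟩ := hPb u v hu hv huv
    exact ⟨by rw [hBA]; exact h1, by rw [hBA, hBA]; exact h2⟩
  have hBscalar := scalar_of_pairs B hBsa e he hp
  refine ⟨(⟪B e, e⟫_ℂ).re, ?_, hBscalar⟩
  rw [hBA e e, re_norm]
  exact pow_pos (norm_pos_iff.mpr (hAne e hene)) 2
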